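/- Let L be a natural number, let A₀, …, A_{L−1} be real C × C skew-symmetric matrices, let α and M ≥ 0 be real numbers with ‖A_l‖₂ ≤ M for all l, and let z₀ ∈ ℝ^C. Define z_{l+1} = (I + α A_l) z_l for l = 0, …, L−1. Then ‖z_L‖₂ ≤ (1 + α² M²)^{L/2} · ‖z₀‖₂. -/

import Mathlib

open Matrix

/-- The operator norm of a real square matrix induced by the Euclidean norm. -/
noncomputable def opNorm2 {C : ℕ} (A : Matrix (Fin C) (Fin C) ℝ) : ℝ :=
  ‖Matrix.toEuclideanCLM (𝕜 := ℝ) A‖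

lemma skew_inner_zero {C : ℕ} (A : Matrix (Fin C) (Fin C) ℝ) (hA : Aᵀ = -A)
    (x : Fin C → ℝ) : x ⬝ᵥ A.mulVec x = 0 := by
  have h1 : x ⬝ᵥ A.mulVec x = A.vecMul x ⬝ᵥ x := Matrix.dotProduct_mulVec _ _ _
  have h2 : A.vecMul x = (Aᵀ).mulVec x := (Matrix.mulVec_transpose A x).symm
  rw [h2, hA] at h1
  have h3 : ((-A).mulVec x) ⬝ᵥ x = -(A.mulVec x ⬝ᵥ x) := by
    simp [Matrix.neg_mulVec]
  have h4 : A.mulVec x ⬝ᵥ x = x ⬝ᵥ A.mulVec x := dotProduct_comm _ _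
  rw [h3, h4] at h1
  linarith

lemma step_bound {C : ℕ} (A : Matrix (Fin C) (Fin C) ℝ) (hA : Aᵀ = -A)
    (α M : ℝ) (hM : 0 ≤ M) (hAM : opNorm2 A ≤ M) (z x : EuclideanSpace ℝ (Fin C))
    (hx : x = (WithLp.toLp 2 (((1 : Matrix (Fin C) (Fin C) ℝ) + α • A).mulVec (z : Fin C → ℝ) : Fin C → ℝ) :
        EuclideanSpace ℝ (Fin C))) :
    ‖x‖ ≤ Real.sqrt (1 + α ^ 2 * M ^ 2) * ‖z‖ := by
  set w : EuclideanSpace ℝ (Fin C) := Matrix.toEuclideanCLM (𝕜 := ℝ) A z with hw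
  have hwv : (w : Fin C → ℝ) = A.mulVec (z : Fin C → ℝ) := by
    rw [hw]
    exact Matrix.ofLp_toEuclideanCLM (𝕜 := ℝ) A z
  have key : x = z + α • w := by
    rw [hx]
    ext i
    have : (((1 : Matrix (Fin C) (Fin C) ℝ) + α • A).mulVec (z : Fin C → ℝ)) i
        = (z : Fin C → ℝ) i + α * (A.mulVec (z : Fin C → ℝ)) i := by
      rw [Matrix.add_mulVec, Matrix.one_mulVec, Matrix.smul_mulVec]
      simp
    simp [this, ← hwv]
  rw [key] at *
  have hinner : (inner ℝ z w : ℝ) = 0 := by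
    have : (inner ℝ z w : ℝ) = (z : Fin C → ℝ) ⬝ᵥ A.mulVec (z : Fin C → ℝ) := by
      rw [← hwv]
      simp [PiLp.inner_apply, dotProduct, RCLike.inner_apply, mul_comm]
    rw [this]
    exact skew_inner_zero A hA _
  have hwnorm : ‖w‖ ≤ M * ‖z‖ := by
    calc ‖w‖ ≤ ‖Matrix.toEuclideanCLM (𝕜 := ℝ) A‖ * ‖z‖ :=
          (Matrix.toEuclideanCLM (𝕜 := ℝ) A).le_opNorm z
      _ ≤ M * ‖z‖ := by
          apply mul_le_mul_of_nonneg_right hAM (norm_nonneg z)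
  have hsq : ‖z + α • w‖ ^ 2 ≤ (1 + α ^ 2 * M ^ 2) * ‖z‖ ^ 2 := by
    have := norm_add_sq_real z (α • w)
    rw [inner_smul_right, hinner, mul_zero] at this
    have hws : ‖α • w‖ ^ 2 = α ^ 2 * ‖w‖ ^ 2 := by
      rw [norm_smul]
      simp [mul_pow, sq_abs]
    have hw2 : ‖w‖ ^ 2 ≤ M ^ 2 * ‖z‖ ^ 2 := by
      have h := mul_self_le_mul_self (norm_nonneg w) hwnorm
      calc ‖w‖ ^ 2 = ‖w‖ * ‖w‖ := sq ‖w‖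
        _ ≤ (M * ‖z‖) * (M * ‖z‖) := h
        _ = M ^ 2 * ‖z‖ ^ 2 := by ring
    nlinarith [sq_nonneg α]
  have h1 : (0 : ℝ) ≤ 1 + α ^ 2 * M ^ 2 := by positivity
  have h2 := Real.sqrt_le_sqrt hsq
  rw [Real.sqrt_sq (norm_nonneg _), Real.sqrt_mul h1, Real.sqrt_sq (norm_nonneg _)] at h2
  exact h2

/-- Uniform multi-layer growth bound: for skew-symmetric generators `A_l` with
`‖A_l‖₂ ≤ M` and updates `z_{l+1} = (I + α A_l) z_l`, one has
`‖z_L‖₂ ≤ (1 + α² M²)^{L/2} · ‖z₀‖₂`. -/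
theorem uniform_multi_layer_growth_bound (C L : ℕ) (A : ℕ → Matrix (Fin C) (Fin C) ℝ)
    (hA : ∀ l, (A l)ᵀ = -(A l)) (α M : ℝ) (hM : 0 ≤ M)
    (hAM : ∀ l, opNorm2 (A l) ≤ M) (z : ℕ → EuclideanSpace ℝ (Fin C))
    (hz : ∀ l < L, z (l + 1)
      = (WithLp.toLp 2 (((1 : Matrix (Fin C) (Fin C) ℝ) + α • A l).mulVec (z l) : Fin C → ℝ) :
          EuclideanSpace ℝ (Fin C))) :
    ‖z L‖ ≤ (1 + α ^ 2 * M ^ 2) ^ ((L : ℝ) / 2) * ‖z 0‖ := by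
  have h1 : (0 : ℝ) ≤ 1 + α ^ 2 * M ^ 2 := by positivity
  have key : ∀ l ≤ L, ‖z l‖ ≤ Real.sqrt (1 + α ^ 2 * M ^ 2) ^ l * ‖z 0‖ := by
    intro l hl
    induction l with
    | zero => simp
    | succ n ih =>
      have hn : n ≤ L := Nat.le_of_succ_le hl
      have hnl : n < L := hl
      refine le_trans (step_bound (A n) (hA n) α M hM (hAM n) (z n) (z (n+1)) (hz n hnl)) ?_
      have h3 := mul_le_mul_of_nonneg_left (ih hn) (Real.sqrt_nonneg (1 + α ^ 2 * M ^ 2))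
      calc Real.sqrt (1 + α ^ 2 * M ^ 2) * ‖z n‖
          ≤ Real.sqrt (1 + α ^ 2 * M ^ 2) * (Real.sqrt (1 + α ^ 2 * M ^ 2) ^ n * ‖z 0‖) := h3
        _ = Real.sqrt (1 + α ^ 2 * M ^ 2) ^ (n + 1) * ‖z 0‖ := by ring
  have hfin := key L le_rfl
  have hrw : Real.sqrt (1 + α ^ 2 * M ^ 2) ^ L = (1 + α ^ 2 * M ^ 2) ^ ((L : ℝ) / 2) := by
    rw [Real.sqrt_eq_rpow, ← Real.rpow_natCast (_ ^ ((1:ℝ)/2)) L, ← Real.rpow_mul h1]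
    ring_nf
  rw [hrw] at hfin
  exact hfin
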